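/- Let D be a subring of ℂ with fraction field D'. Let A, B ∈ D[X] with B ≠ 0, deg A = d ≥ deg B = d−β, v(A) arbitrary and v(B) = α. Then there exist polynomials Q, R ∈ D'[X], uniquely determined, such that deg Q = α+β, deg R < d−(α+β), and A = Q·(B/X^α) + X^β·R. -/

import Mathlib

open Polynomial

private theorem sym_div_aux {K : Type*} [Field K] (Am b : K[X]) (d α β : ℕ)
    (hαβd : α + β ≤ d)
    (hAdeg : Am.degree = (d : WithBot ℕ))
    (hbdeg : b.degree = ((d - (α + β) : ℕ) : WithBot ℕ))
    (hb0 : b.coeff 0 ≠ 0) :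
    ∃! QR : K[X] × K[X],
      QR.1.degree = ((α + β : ℕ) : WithBot ℕ) ∧
      QR.2.degree < ((d - (α + β) : ℕ) : WithBot ℕ) ∧
      Am = QR.1 * b + X ^ β * QR.2 := by
  set m : ℕ := d - (α + β) with hm
  have hmd : m + (α + β) = d := Nat.sub_add_cancel hαβd
  have hbne : b ≠ 0 := fun h => hb0 (by simp [h])
  have hXb : IsCoprime (X : K[X]) b :=
    (Polynomial.irreducible_X).coprime_iff_not_dvd.mpr (by
      rw [Polynomial.X_dvd_iff]; exact hb0)
  have hcop : IsCoprime ((X : K[X]) ^ β) b := hXb.pow_left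
  obtain ⟨u, v, huv⟩ := hcop
  set Q1 : K[X] := Am / b with hQ1
  set R1 : K[X] := Am % b with hR1def
  have heq1 : b * Q1 + R1 = Am := EuclideanDomain.div_add_mod Am b
  have hR1 : R1.degree < b.degree := EuclideanDomain.mod_lt Am hbne
  have hmonβ : Monic ((X : K[X]) ^ β) := monic_X_pow β
  set S : K[X] := (R1 * v) %ₘ X ^ β with hSdef
  set W : K[X] := (R1 * v) /ₘ X ^ β with hWdef
  have hSW : S + X ^ β * W = R1 * v := modByMonic_add_div (R1 * v) (X ^ β)
  have hSdeg : S.degree < (β : WithBot ℕ) := by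
    have := degree_modByMonic_lt (R1 * v) hmonβ
    rwa [degree_X_pow] at this
  have hdvd : (X : K[X]) ^ β ∣ (R1 - S * b) := by
    refine ⟨R1 * u + W * b, ?_⟩
    linear_combination (-b) * hSW - R1 * huv
  set R : K[X] := (R1 - S * b) /ₘ X ^ β with hRdef
  have hXR : X ^ β * R = R1 - S * b := by
    have h0 : (R1 - S * b) %ₘ X ^ β = 0 := (modByMonic_eq_zero_iff_dvd hmonβ).mpr hdvd
    have := modByMonic_add_div (R1 - S * b) (X ^ β)
    rw [h0, zero_add] at this
    exact this
  -- degree of Q1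
  have hble : b.degree ≤ Am.degree := by
    rw [hbdeg, hAdeg]
    exact_mod_cast Nat.sub_le d (α + β)
  have hQ1deg : Q1.degree = ((α + β : ℕ) : WithBot ℕ) := by
    have h := degree_add_div hbne hble
    rw [hbdeg, hAdeg, ← hQ1] at h
    have hQ1ne : Q1 ≠ 0 := by
      intro h0
      rw [h0, degree_zero] at h
      simp at h
    rw [degree_eq_natDegree hQ1ne] at h ⊢
    norm_cast at h ⊢
    omega
  set Q : K[X] := Q1 + S with hQdef
  have hQdeg : Q.degree = ((α + β : ℕ) : WithBot ℕ) := by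
    rw [hQdef, degree_add_eq_left_of_degree_lt, hQ1deg]
    rw [hQ1deg]
    exact lt_of_lt_of_le hSdeg (by exact_mod_cast Nat.le_add_left β α)
  have hRdeg : R.degree < (m : WithBot ℕ) := by
    rcases eq_or_ne R 0 with h0 | h0
    · rw [h0, degree_zero]; exact WithBot.bot_lt_coe m
    · have hXRdeg : (X ^ β * R).degree < ((β + m : ℕ) : WithBot ℕ) := by
        rw [hXR]
        refine lt_of_le_of_lt (degree_sub_le _ _) (max_lt ?_ ?_)
        · rw [hbdeg] at hR1
          exact lt_of_lt_of_le hR1 (by exact_mod_cast Nat.le_add_left m β)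
        · rcases eq_or_ne S 0 with hs0 | hs0
          · rw [hs0, zero_mul, degree_zero]; exact WithBot.bot_lt_coe _
          · rw [degree_mul, hbdeg, degree_eq_natDegree hs0]
            have : S.natDegree < β := by
              rw [degree_eq_natDegree hs0] at hSdeg; exact_mod_cast hSdeg
            push_cast
            exact_mod_cast (by exact_mod_cast Nat.add_lt_add_right this m :
              ((S.natDegree + m : ℕ) : WithBot ℕ) < ((β + m : ℕ) : WithBot ℕ))
      rw [degree_mul, degree_X_pow, degree_eq_natDegree h0] at hXRdeg
      have hn : β + R.natDegree < β + m := by exact_mod_cast hXRdeg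
      rw [degree_eq_natDegree h0]
      exact_mod_cast (by omega : R.natDegree < m)
  have heqn : Am = Q * b + X ^ β * R := by
    rw [hXR, hQdef]
    linear_combination -heq1
  refine ⟨(Q, R), ⟨hQdeg, hRdeg, heqn⟩, ?_⟩
  rintro ⟨Q', R'⟩ ⟨h1, h2, h3⟩
  -- uniqueness
  have hXβne : ((X : K[X]) ^ β) ≠ 0 := pow_ne_zero β X_ne_zero
  have key : (Q' - Q) * b = X ^ β * (R - R') := by
    rw [heqn] at h3
    linear_combination -h3
  have hdvd' : (X : K[X]) ^ β ∣ (Q' - Q) := by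
    refine (IsCoprime.pow_left hXb).dvd_of_dvd_mul_right ?_
    exact ⟨R - R', key⟩
  obtain ⟨T, hT⟩ := hdvd'
  have hTb : T * b = R - R' := by
    apply mul_left_cancel₀ hXβne
    rw [← key, hT]; ring
  have hT0 : T = 0 := by
    by_contra hT0
    have h4 : (T * b).degree < (m : WithBot ℕ) := by
      rw [hTb]
      refine lt_of_le_of_lt (degree_sub_le _ _) (max_lt hRdeg h2)
    rw [degree_mul, hbdeg, degree_eq_natDegree hT0] at h4
    have : ((T.natDegree + m : ℕ) : WithBot ℕ) < (m : WithBot ℕ) := by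
      push_cast; exact_mod_cast h4
    exact absurd (by exact_mod_cast this : T.natDegree + m < m) (by omega)
  have hQQ : Q' = Q := by
    have := hT
    rw [hT0, mul_zero, sub_eq_zero] at this
    exact this
  have hRR : R' = R := by
    have := hTb
    rw [hT0, zero_mul, eq_comm, sub_eq_zero] at this
    exact this.symm
  exact Prod.ext hQQ hRR

private theorem sym_div_main {R : Type*} {K : Type*} [CommRing R] [Field K]
    (φ : R →+* K) (hinj : Function.Injective φ) (A B : R[X]) (d α β : ℕ)
    (hB : B ≠ 0) (hAdeg : A.degree = (d : ℕ)) (hβd : β ≤ d)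
    (hBdeg : B.degree = ((d - β : ℕ) : WithBot ℕ))
    (hBval : B.natTrailingDegree = α) :
    ∃! QR : K[X] × K[X],
      QR.1.degree = ((α + β : ℕ) : WithBot ℕ) ∧
      QR.2.degree < ((d - (α + β) : ℕ) : WithBot ℕ) ∧
      A.map φ = QR.1 * (B.map φ /ₘ X ^ α) + X ^ β * QR.2 := by
  set Am : K[X] := A.map φ with hAm
  set Bm : K[X] := B.map φ with hBm
  have hAmdeg : Am.degree = (d : WithBot ℕ) := by
    rw [hAm, degree_map_eq_of_injective hinj, hAdeg]
  have hBmdeg : Bm.degree = ((d - β : ℕ) : WithBot ℕ) := by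
    rw [hBm, degree_map_eq_of_injective hinj, hBdeg]
  have hBm0 : Bm ≠ 0 := by
    intro h
    rw [h, degree_zero] at hBmdeg
    exact absurd hBmdeg.symm (by simp)
  have hBnd : B.natDegree = d - β := natDegree_eq_of_degree_eq_some hBdeg
  have hαle : α ≤ d - β := by
    rw [← hBval, ← hBnd]; exact B.natTrailingDegree_le_natDegree
  have hαβd : α + β ≤ d := by omega
  have hdvdB : (X : K[X]) ^ α ∣ Bm := by
    have h1 : (X : R[X]) ^ α ∣ B := by
      rw [X_pow_dvd_iff]
      intro n hn
      exact coeff_eq_zero_of_lt_natTrailingDegree (by omega)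
    obtain ⟨c, hc⟩ := h1
    refine ⟨c.map φ, ?_⟩
    rw [hBm, hc, Polynomial.map_mul, Polynomial.map_pow, map_X]
  set b : K[X] := Bm /ₘ X ^ α with hbdef
  have hmonα : Monic ((X : K[X]) ^ α) := monic_X_pow α
  have hfac : Bm = X ^ α * b := by
    have h0 : Bm %ₘ X ^ α = 0 := (modByMonic_eq_zero_iff_dvd hmonα).mpr hdvdB
    have h5 := modByMonic_add_div Bm (X ^ α)
    rw [h0, zero_add] at h5
    exact h5.symm
  have hb0 : b.coeff 0 ≠ 0 := by
    have h1 : Bm.coeff α = b.coeff 0 := by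
      rw [hfac]
      simpa using coeff_X_pow_mul b α 0
    have h2 : Bm.coeff α = φ (B.coeff α) := by rw [hBm, coeff_map]
    have h3 : B.coeff α ≠ 0 := by
      rw [← hBval]
      exact trailingCoeff_nonzero_iff_nonzero.mpr hB
    rw [← h1, h2]
    intro h
    exact h3 (hinj (by rw [h, map_zero]))
  have hbne : b ≠ 0 := by
    intro h
    rw [h, mul_zero] at hfac
    exact hBm0 hfac
  have hbdeg : b.degree = ((d - (α + β) : ℕ) : WithBot ℕ) := by
    have h1 : Bm.degree = (α : WithBot ℕ) + b.degree := by
      rw [hfac, degree_mul, degree_X_pow]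
    rw [hBmdeg, degree_eq_natDegree hbne] at h1
    rw [degree_eq_natDegree hbne]
    have h2 : d - β = α + b.natDegree := by exact_mod_cast h1
    exact_mod_cast (by omega : b.natDegree = d - (α + β))
  exact sym_div_aux Am b d α β hαβd hAmdeg hbdeg hb0

/-- Symmetric division: for `A, B ∈ D[X]` with `B ≠ 0`, `deg A = d ≥ deg B = d - β` and
`v(B) = α`, there exist unique `Q, R` over the fraction field `D'` of `D` with
`deg Q = α + β`, `deg R < d - (α+β)` and `A = Q·(B/X^α) + X^β·R`. -/
theorem symmetric_division (D : Subring ℂ) (A B : Polynomial D) (d α β : ℕ)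
    (hB : B ≠ 0) (hAdeg : A.degree = (d : ℕ)) (hβd : β ≤ d)
    (hBdeg : B.degree = ((d - β : ℕ) : WithBot ℕ))
    (hBval : B.natTrailingDegree = α) :
    ∃! QR : Polynomial (FractionRing D) × Polynomial (FractionRing D),
      QR.1.degree = ((α + β : ℕ) : WithBot ℕ) ∧
      QR.2.degree < ((d - (α + β) : ℕ) : WithBot ℕ) ∧
      A.map (algebraMap D (FractionRing D)) =
        QR.1 * (B.map (algebraMap D (FractionRing D)) /ₘ X ^ α) + X ^ β * QR.2 := by
  exact sym_div_main (algebraMap D (FractionRing D))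
    (IsFractionRing.injective D (FractionRing D)) A B d α β hB hAdeg hβd hBdeg hBval
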